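/- Let X = 10^x, a₀ ∈ {0,…,9}, and 𝒜 = {n < X : no decimal digit of n equals a₀}. For any positive integer q with gcd(q, 10) = 1, #{a ∈ 𝒜 : q | a, gcd(a,10) = 1} = (1/q)·#{a ∈ 𝒜 : gcd(a,10)=1} + O( (#𝒜/q)·Σ_{q'|q, q'>1} Σ_{1≤b≤10q', gcd(b,q')=1} F_X(b/(10q')) ), where F_X(θ) = (1/#𝒜)|Σ_{a∈𝒜} e(aθ)|. -/

import Mathlib

/-- `e(x) = exp(2πix)`. -/
noncomputable def e (x : ℝ) : ℂ := Complex.exp (2 * Real.pi * Complex.I * x)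

lemma e_add (x y : ℝ) : e (x + y) = e x * e y := by
  simp [e, ← Complex.exp_add]; ring_nf

lemma e_pow (x : ℝ) (n : ℕ) : e x ^ n = e (x * n) := by
  induction n with
  | zero => simp [e]
  | succ k ih =>
    rw [pow_succ, ih, ← e_add]
    congr 1
    push_cast
    ring

lemma e_int (n : ℤ) : e n = 1 := by
  simp only [e]
  rw [show ((2:ℂ) * Real.pi * Complex.I * (n:ℝ)) = (n:ℤ) * (2 * Real.pi * Complex.I) by push_cast; ring]
  exact Complex.exp_int_mul_two_pi_mul_I n

lemma e_eq_one_iff (x : ℝ) : e x = 1 ↔ ∃ n : ℤ, x = n := by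
  constructor
  · intro h
    rw [e, Complex.exp_eq_one_iff] at h
    obtain ⟨n, hn⟩ := h
    refine ⟨n, ?_⟩
    have hI : (2:ℂ) * Real.pi * Complex.I * x = n * (2 * Real.pi * Complex.I) := hn
    have h2 : ((x:ℂ) - n) * (2 * Real.pi * Complex.I) = 0 := by ring_nf; linear_combination hI
    have := mul_eq_zero.1 h2
    rcases this with h | h
    · exact_mod_cast sub_eq_zero.1 h
    · exfalso
      simp [Complex.ext_iff, Real.pi_ne_zero] at h
  · rintro ⟨n, rfl⟩; exact e_int n

lemma e_orth (N a : ℕ) (hN : 0 < N) :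
    ∑ r ∈ Finset.range N, e ((a : ℝ) * ((r : ℝ) / N)) = if N ∣ a then (N : ℂ) else 0 := by
  have key : ∀ r : ℕ, e ((a : ℝ) * ((r : ℝ) / N)) = e ((a : ℝ) / N) ^ r := by
    intro r; rw [e_pow]; ring_nf
  simp only [key]
  by_cases h : N ∣ a
  · obtain ⟨k, rfl⟩ := h
    rw [if_pos ⟨k, rfl⟩]
    have : e ((N * k : ℕ) / (N : ℝ)) = 1 := by
      rw [show ((N * k : ℕ) : ℝ) / N = ((k : ℤ) : ℝ) by push_cast; field_simp]
      exact e_int k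
    rw [this]
    simp
  · rw [if_neg h]
    have hne : e ((a : ℝ) / N) ≠ 1 := by
      rw [Ne, e_eq_one_iff]
      rintro ⟨n, hn⟩
      apply h
      have : (a : ℝ) = n * N := by field_simp at hn; linarith [hn]
      have ha : (a : ℤ) = n * N := by exact_mod_cast this
      have : (N:ℤ) ∣ (a:ℤ) := ⟨n, by rw [ha]; ring⟩
      exact_mod_cast this
    rw [geom_sum_eq hne]
    have : e ((a : ℝ) / N) ^ N = 1 := by
      rw [e_pow, show (a : ℝ) / N * N = ((a : ℤ) : ℝ) by field_simp; norm_cast]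
      exact e_int a
    simp [this]

/-- The set `𝒜` of integers below `10^x` none of whose `x` base-10 digits equals `a₀`. -/
def A (a₀ x : ℕ) : Finset ℕ :=
  (Finset.range (10^x)).filter (fun n => ∀ i < x, n / 10^i % 10 ≠ a₀)

/-- `F_X(θ) = (1/#𝒜)|Σ_{a∈𝒜} e(aθ)|`. -/
noncomputable def FX (a₀ x : ℕ) (θ : ℝ) : ℝ :=
  (1 / ((A a₀ x).card : ℝ)) * ‖∑ a ∈ A a₀ x, e ((a : ℝ) * θ)‖

noncomputable def S (a₀ x : ℕ) (θ : ℝ) : ℂ := ∑ a ∈ A a₀ x, e ((a : ℝ) * θ)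

lemma abs_S (a₀ x : ℕ) (θ : ℝ) :
    ‖S a₀ x θ‖ = ((A a₀ x).card : ℝ) * FX a₀ x θ := by
  rcases Nat.eq_zero_or_pos (A a₀ x).card with h | h
  · have : A a₀ x = ∅ := Finset.card_eq_zero.mp h
    simp [S, FX, this]
  · rw [FX, S]
    field_simp
    simp_rw [mul_comm θ]

lemma FX_nonneg (a₀ x : ℕ) (θ : ℝ) : 0 ≤ FX a₀ x θ := by
  apply mul_nonneg
  · positivity
  · exact norm_nonneg _

lemma cS (a₀ x N : ℕ) (hN : 0 < N) :
    ((((A a₀ x).filter (fun a => N ∣ a)).card : ℂ)) =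
      (1 / (N : ℂ)) * ∑ r ∈ Finset.range N, S a₀ x ((r : ℝ) / N) := by
  have hN' : (N : ℂ) ≠ 0 := Nat.cast_ne_zero.mpr hN.ne'
  simp only [S]
  rw [Finset.sum_comm]
  have : ∀ a ∈ A a₀ x, ∑ r ∈ Finset.range N, e ((a : ℝ) * ((r : ℝ) / N))
      = if N ∣ a then (N : ℂ) else 0 := fun a _ => e_orth N a hN
  rw [Finset.sum_congr rfl this, Finset.card_filter]
  push_cast
  rw [Finset.mul_sum]
  apply Finset.sum_congr rfl
  intro a _
  split <;> simp_all

lemma mobius_pt (q : ℕ) (hq : Nat.gcd q 10 = 1) (a : ℕ) :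
    (if q ∣ a ∧ Nat.gcd a 10 = 1 then (1 : ℂ) else 0)
      = (if q ∣ a then 1 else 0) - (if 2 * q ∣ a then 1 else 0)
        - (if 5 * q ∣ a then 1 else 0) + (if 10 * q ∣ a then 1 else 0) := by
  have hq' : Nat.Coprime q 10 := hq
  have hq25 : Nat.Coprime q 2 ∧ Nat.Coprime q 5 :=
    Nat.coprime_mul_iff_right.mp (by rw [show (2 * 5 : ℕ) = 10 by norm_num]; exact hq')
  have hq2 : Nat.Coprime 2 q := hq25.1.symm
  have hq5 : Nat.Coprime 5 q := hq25.2.symm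
  have hq10 : Nat.Coprime 10 q := hq'.symm
  have e2 : 2 * q ∣ a ↔ 2 ∣ a ∧ q ∣ a := by
    constructor
    · intro h; exact ⟨(dvd_mul_right 2 q).trans h, (dvd_mul_left q 2).trans h⟩
    · rintro ⟨h1, h2⟩; exact hq2.mul_dvd_of_dvd_of_dvd h1 h2
  have e5 : 5 * q ∣ a ↔ 5 ∣ a ∧ q ∣ a := by
    constructor
    · intro h; exact ⟨(dvd_mul_right 5 q).trans h, (dvd_mul_left q 5).trans h⟩
    · rintro ⟨h1, h2⟩; exact hq5.mul_dvd_of_dvd_of_dvd h1 h2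
  have e10 : 10 * q ∣ a ↔ (2 ∣ a ∧ 5 ∣ a) ∧ q ∣ a := by
    constructor
    · intro h
      exact ⟨⟨(by norm_num : (2:ℕ) ∣ 10).trans ((dvd_mul_right 10 q).trans h),
              (by norm_num : (5:ℕ) ∣ 10).trans ((dvd_mul_right 10 q).trans h)⟩,
             (dvd_mul_left q 10).trans h⟩
    · rintro ⟨⟨h1, h2⟩, h3⟩
      have hcop : Nat.Coprime 2 5 :=
        (Nat.coprime_primes (by norm_num) (by norm_num)).mpr (by norm_num)
      have h10 : (10:ℕ) ∣ a := by
        rw [show (10:ℕ) = 2 * 5 by norm_num]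
        exact hcop.mul_dvd_of_dvd_of_dvd h1 h2
      exact hq10.mul_dvd_of_dvd_of_dvd h10 h3
  have eg : Nat.gcd a 10 = 1 ↔ ¬2 ∣ a ∧ ¬5 ∣ a := by
    have h2 : Nat.Coprime a 2 ↔ ¬2 ∣ a := by
      rw [Nat.coprime_comm]; exact Nat.Prime.coprime_iff_not_dvd (by norm_num)
    have h5 : Nat.Coprime a 5 ↔ ¬5 ∣ a := by
      rw [Nat.coprime_comm]; exact Nat.Prime.coprime_iff_not_dvd (by norm_num)
    have hsplit : Nat.Coprime a 10 ↔ Nat.Coprime a 2 ∧ Nat.Coprime a 5 := by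
      rw [show (10:ℕ) = 2 * 5 by norm_num, Nat.coprime_mul_iff_right]
    exact hsplit.trans (and_congr h2 h5)
  by_cases hqa : q ∣ a <;> by_cases h2 : 2 ∣ a <;> by_cases h5 : 5 ∣ a <;>
    simp [e2, e5, e10, eg, hqa, h2, h5]

lemma mobius_sum (a₀ x q : ℕ) (hq : Nat.gcd q 10 = 1) :
    ((((A a₀ x).filter (fun a => q ∣ a ∧ Nat.gcd a 10 = 1)).card : ℂ))
      = (((A a₀ x).filter (fun a => q ∣ a)).card : ℂ)
        - (((A a₀ x).filter (fun a => 2 * q ∣ a)).card : ℂ)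
        - (((A a₀ x).filter (fun a => 5 * q ∣ a)).card : ℂ)
        + (((A a₀ x).filter (fun a => 10 * q ∣ a)).card : ℂ) := by
  have key : ∀ N : ℕ → Prop, ∀ _ : DecidablePred N, True := fun _ _ => trivial
  have h : ∀ (p : ℕ → Prop) [DecidablePred p],
      (((A a₀ x).filter p).card : ℂ) = ∑ a ∈ A a₀ x, if p a then (1:ℂ) else 0 := by
    intro p hp
    rw [Finset.card_filter]
    push_cast
    apply Finset.sum_congr rfl
    intro a _
    split <;> simp
  rw [h, h, h, h, h, ← Finset.sum_sub_distrib, ← Finset.sum_sub_distrib,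
    ← Finset.sum_add_distrib]
  exact Finset.sum_congr rfl fun a _ => mobius_pt q hq a

lemma err_decomp (a₀ x q d : ℕ) (hq : 0 < q) (hd : 0 < d) :
    (((A a₀ x).filter (fun a => d * q ∣ a)).card : ℂ)
      - (1 / (q : ℂ)) * (((A a₀ x).filter (fun a => d ∣ a)).card : ℂ)
    = (1 / ((d : ℂ) * q)) * ∑ r ∈ (Finset.range (d * q)).filter (fun r => ¬ q ∣ r),
        S a₀ x ((r : ℝ) / (d * q)) := by
  have hdq : 0 < d * q := Nat.mul_pos hd hq
  have hqC : (q : ℂ) ≠ 0 := Nat.cast_ne_zero.mpr hq.ne'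
  have hdC : (d : ℂ) ≠ 0 := Nat.cast_ne_zero.mpr hd.ne'
  rw [cS a₀ x (d * q) hdq, cS a₀ x d hd]
  rw [← Finset.sum_filter_add_sum_filter_not (Finset.range (d * q)) (fun r => q ∣ r)]
  have himg : (Finset.range (d * q)).filter (fun r => q ∣ r)
      = (Finset.range d).image (fun s => q * s) := by
    ext r
    simp only [Finset.mem_filter, Finset.mem_range, Finset.mem_image]
    constructor
    · rintro ⟨hlt, s, rfl⟩
      exact ⟨s, by
        rw [mul_comm d q] at hlt
        exact lt_of_mul_lt_mul_left hlt (Nat.zero_le q), rfl⟩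
    · rintro ⟨s, hs, rfl⟩
      exact ⟨by rw [mul_comm d q]; exact Nat.mul_lt_mul_left hq |>.mpr hs, s, rfl⟩
  have hinj : ∀ s1 ∈ Finset.range d, ∀ s2 ∈ Finset.range d, q * s1 = q * s2 → s1 = s2 :=
    fun s1 _ s2 _ h => Nat.eq_of_mul_eq_mul_left hq h
  rw [himg, Finset.sum_image hinj]
  have harg : ∀ s : ℕ, ((q * s : ℕ) : ℝ) / ((d * q : ℕ) : ℝ) = (s : ℝ) / d := by
    intro s
    have : (q : ℝ) ≠ 0 := Nat.cast_ne_zero.mpr hq.ne'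
    have : (d : ℝ) ≠ 0 := Nat.cast_ne_zero.mpr hd.ne'
    push_cast
    field_simp
  simp only [harg]
  push_cast
  have : ((d : ℝ) : ℂ) = (d : ℂ) := by norm_cast
  field_simp
  ring

lemma phi_facts (q d r : ℕ) (hq : 0 < q) (hd : d ∣ 10) (hcop : Nat.gcd q 10 = 1)
    (hr : r < d * q) (hnq : ¬ q ∣ r) :
    (q / Nat.gcd r q ∈ q.divisors.filter (fun m => 1 < m)) ∧
    ((10 / d) * (r / Nat.gcd r q) ∈
      (Finset.Icc 1 (10 * (q / Nat.gcd r q))).filter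
        (fun b => Nat.gcd b (q / Nat.gcd r q) = 1)) ∧
    ((r : ℝ) / ((d : ℝ) * q)
      = (((10 / d) * (r / Nat.gcd r q) : ℕ) : ℝ) / (10 * ((q / Nat.gcd r q : ℕ) : ℝ))) := by
  set g := Nat.gcd r q with hg
  have hd0 : 0 < d := Nat.pos_of_dvd_of_pos hd (by norm_num)
  have hg0 : 0 < g := Nat.gcd_pos_of_pos_right r hq
  have hgr : g ∣ r := Nat.gcd_dvd_left r q
  have hgq : g ∣ q := Nat.gcd_dvd_right r q
  have hr0 : 0 < r := by
    rcases Nat.eq_zero_or_pos r with rfl | h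
    · exact absurd (dvd_zero q) hnq
    · exact h
  set q' := q / g with hq'def
  have hq'dvd : q' ∣ q := Nat.div_dvd_of_dvd hgq
  have hq'0 : 0 < q' := Nat.div_pos (Nat.le_of_dvd hq hgq) hg0
  have hgq' : g * q' = q := Nat.mul_div_cancel' hgq
  have hgne : g ≠ q := fun h => hnq (h ▸ hgr)
  have h1q' : 1 < q' := by
    rcases Nat.lt_or_ge 1 q' with h | h
    · exact h
    · exfalso
      have : q' = 1 := le_antisymm h hq'0
      apply hgne
      rw [← hgq', this, mul_one]
  have h10d : 0 < 10 / d := Nat.div_pos (Nat.le_of_dvd (by norm_num) hd) hd0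
  have hrg0 : 0 < r / g := Nat.div_pos (Nat.le_of_dvd hr0 hgr) hg0
  have hrglt : r / g < d * q' := by
    apply (Nat.div_lt_iff_lt_mul hg0).mpr
    calc r < d * q := hr
    _ = d * q' * g := by rw [mul_assoc, mul_comm q' g, hgq']
  have hdd : (10 / d) * d = 10 := Nat.div_mul_cancel hd
  have hblt : (10 / d) * (r / g) < 10 * q' := by
    calc (10 / d) * (r / g) < (10 / d) * (d * q') := by
          exact Nat.mul_lt_mul_of_le_of_lt (le_refl _) hrglt h10d
    _ = ((10 / d) * d) * q' := by ring
    _ = 10 * q' := by rw [hdd]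
  have hb1 : 1 ≤ (10 / d) * (r / g) := Nat.one_le_iff_ne_zero.mpr
    (Nat.mul_ne_zero h10d.ne' hrg0.ne')
  have hco1 : Nat.Coprime (r / g) q' := Nat.coprime_div_gcd_div_gcd hg0
  have hco10q : Nat.Coprime 10 q := (Nat.Coprime.symm hcop)
  have hco2 : Nat.Coprime (10 / d) q' :=
    Nat.Coprime.coprime_dvd_left (Nat.div_dvd_of_dvd hd)
      (Nat.Coprime.coprime_dvd_right hq'dvd hco10q)
  have hcob : Nat.Coprime ((10 / d) * (r / g)) q' := Nat.Coprime.mul hco2 hco1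
  have keymul : r * q' = (r / g) * q := by
    rw [hq'def, ← Nat.mul_div_assoc r hgq, mul_comm (r / g) q, ← Nat.mul_div_assoc q hgr,
      mul_comm r q]
  have natid : r * (10 * q') = ((10 / d) * (r / g)) * (d * q) := by
    have h1 : ((10 / d) * (r / g)) * (d * q) = ((10 / d) * d) * ((r / g) * q) := by ring
    rw [h1, hdd, ← keymul]
    ring
  refine ⟨?_, ?_, ?_⟩
  · simp only [Finset.mem_filter, Nat.mem_divisors]
    exact ⟨⟨hq'dvd, hq.ne'⟩, h1q'⟩
  · simp only [Finset.mem_filter, Finset.mem_Icc]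
    exact ⟨⟨hb1, hblt.le⟩, hcob⟩
  · rw [div_eq_div_iff (by positivity) (by positivity)]
    push_cast
    have := congrArg (fun n : ℕ => (n : ℝ)) natid
    push_cast at this
    linarith [this]

lemma sum_bound (a₀ x q d : ℕ) (hq : 0 < q) (hd : d ∣ 10) (hcop : Nat.gcd q 10 = 1) :
    ∑ r ∈ (Finset.range (d * q)).filter (fun r => ¬ q ∣ r),
        ‖S a₀ x ((r : ℝ) / ((d : ℝ) * q))‖
    ≤ ((A a₀ x).card : ℝ) *
        ∑ q' ∈ q.divisors.filter (fun m => 1 < m),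
          ∑ b ∈ (Finset.Icc 1 (10 * q')).filter (fun b => Nat.gcd b q' = 1),
            FX a₀ x ((b : ℝ) / (10 * (q' : ℝ))) := by
  classical
  set T := (Finset.range (d * q)).filter (fun r => ¬ q ∣ r) with hT
  set Φ : ℕ → (Σ _ : ℕ, ℕ) := fun r => ⟨q / Nat.gcd r q, 10 / d * (r / Nat.gcd r q)⟩ with hΦ
  set f : (Σ _ : ℕ, ℕ) → ℝ := fun p => FX a₀ x ((p.2 : ℝ) / (10 * (p.1 : ℝ))) with hf
  have hd0 : 0 < d := Nat.pos_of_dvd_of_pos hd (by norm_num)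
  have hmemT : ∀ r ∈ T, r < d * q ∧ ¬ q ∣ r := by
    intro r hrT
    rw [hT, Finset.mem_filter, Finset.mem_range] at hrT
    exact hrT
  have step1 : ∀ r ∈ T, ‖S a₀ x ((r : ℝ) / ((d : ℝ) * q))‖
      = ((A a₀ x).card : ℝ) * f (Φ r) := by
    intro r hrT
    obtain ⟨hrlt, hnq⟩ := hmemT r hrT
    obtain ⟨_, _, harg⟩ := phi_facts q d r hq hd hcop hrlt hnq
    rw [abs_S, harg, hf, hΦ]
  rw [Finset.sum_congr rfl step1, ← Finset.mul_sum]
  have hinj : ∀ r1 ∈ T, ∀ r2 ∈ T, Φ r1 = Φ r2 → r1 = r2 := by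
    intro r1 h1 r2 h2 heq
    obtain ⟨hlt1, hnq1⟩ := hmemT r1 h1
    obtain ⟨hlt2, hnq2⟩ := hmemT r2 h2
    have hr10 : r1 ≠ 0 := by rintro rfl; exact hnq1 (dvd_zero q)
    have hr20 : r2 ≠ 0 := by rintro rfl; exact hnq2 (dvd_zero q)
    have hg1q : Nat.gcd r1 q ∣ q := Nat.gcd_dvd_right r1 q
    have hg2q : Nat.gcd r2 q ∣ q := Nat.gcd_dvd_right r2 q
    have hg1r : Nat.gcd r1 q ∣ r1 := Nat.gcd_dvd_left r1 q
    have hg2r : Nat.gcd r2 q ∣ r2 := Nat.gcd_dvd_left r2 q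
    have heq1 : q / Nat.gcd r1 q = q / Nat.gcd r2 q := congrArg Sigma.fst heq
    have heq2 : 10 / d * (r1 / Nat.gcd r1 q) = 10 / d * (r2 / Nat.gcd r2 q) :=
      congrArg Sigma.snd heq
    have hgeq : Nat.gcd r1 q = Nat.gcd r2 q := by
      have e1 : q / (q / Nat.gcd r1 q) = Nat.gcd r1 q := Nat.div_div_self hg1q hq.ne'
      have e2 : q / (q / Nat.gcd r2 q) = Nat.gcd r2 q := Nat.div_div_self hg2q hq.ne'
      rw [← e1, ← e2, heq1]
    have h10d : 0 < 10 / d := Nat.div_pos (Nat.le_of_dvd (by norm_num) hd) hd0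
    rw [hgeq] at heq2 hg1r
    have hdiv : r1 / Nat.gcd r2 q = r2 / Nat.gcd r2 q :=
      Nat.eq_of_mul_eq_mul_left h10d heq2
    calc r1 = Nat.gcd r2 q * (r1 / Nat.gcd r2 q) := (Nat.mul_div_cancel' hg1r).symm
    _ = Nat.gcd r2 q * (r2 / Nat.gcd r2 q) := by rw [hdiv]
    _ = r2 := Nat.mul_div_cancel' hg2r
  rw [← Finset.sum_image hinj]
  have hsub : T.image Φ ⊆ (q.divisors.filter (fun m => 1 < m)).sigma
      (fun q' => (Finset.Icc 1 (10 * q')).filter (fun b => Nat.gcd b q' = 1)) := by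
    intro p hp
    rw [Finset.mem_image] at hp
    obtain ⟨r, hrT, rfl⟩ := hp
    obtain ⟨hrlt, hnq⟩ := hmemT r hrT
    obtain ⟨hm1, hm2, _⟩ := phi_facts q d r hq hd hcop hrlt hnq
    rw [Finset.mem_sigma]
    exact ⟨hm1, hm2⟩
  have hle : ∑ p ∈ T.image Φ, f p ≤ ∑ p ∈ (q.divisors.filter (fun m => 1 < m)).sigma
      (fun q' => (Finset.Icc 1 (10 * q')).filter (fun b => Nat.gcd b q' = 1)), f p :=
    Finset.sum_le_sum_of_subset_of_nonneg hsub (fun p _ _ => FX_nonneg a₀ x _)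
  have hfin : ∑ p ∈ (q.divisors.filter (fun m => 1 < m)).sigma
      (fun q' => (Finset.Icc 1 (10 * q')).filter (fun b => Nat.gcd b q' = 1)), f p
      = ∑ q' ∈ q.divisors.filter (fun m => 1 < m),
          ∑ b ∈ (Finset.Icc 1 (10 * q')).filter (fun b => Nat.gcd b q' = 1),
            FX a₀ x ((b : ℝ) / (10 * (q' : ℝ))) := by
    rw [Finset.sum_sigma]
  exact mul_le_mul_of_nonneg_left (hfin ▸ hle) (Nat.cast_nonneg _)

lemma Ed_bound (a₀ x q d : ℕ) (hq : 0 < q) (hd : d ∣ 10) (hcop : Nat.gcd q 10 = 1) :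
    ‖(((A a₀ x).filter (fun a => d * q ∣ a)).card : ℂ)
        - (1 / (q : ℂ)) * (((A a₀ x).filter (fun a => d ∣ a)).card : ℂ)‖
    ≤ (1 / ((d : ℝ) * q)) * (((A a₀ x).card : ℝ) *
        ∑ q' ∈ q.divisors.filter (fun m => 1 < m),
          ∑ b ∈ (Finset.Icc 1 (10 * q')).filter (fun b => Nat.gcd b q' = 1),
            FX a₀ x ((b : ℝ) / (10 * (q' : ℝ)))) := by
  have hd0 : 0 < d := Nat.pos_of_dvd_of_pos hd (by norm_num)
  rw [err_decomp a₀ x q d hq hd0, norm_mul]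
  have habs1 : ‖1 / ((d : ℂ) * q)‖ = 1 / ((d : ℝ) * q) := by
    rw [norm_div, norm_one, norm_mul, Complex.norm_natCast, Complex.norm_natCast]
  rw [habs1]
  apply mul_le_mul_of_nonneg_left _ (by positivity)
  exact le_trans (norm_sum_le _ _) (sum_bound a₀ x q d hq hd hcop)

theorem stmt_18 : ∃ C : ℝ, 0 < C ∧
    ∀ (x a₀ q : ℕ), a₀ ≤ 9 → 1 ≤ x → 0 < q → Nat.gcd q 10 = 1 →
      abs ((((A a₀ x).filter (fun a => q ∣ a ∧ Nat.gcd a 10 = 1)).card : ℝ)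
          - (1 / (q : ℝ)) * (((A a₀ x).filter (fun a => Nat.gcd a 10 = 1)).card : ℝ))
        ≤ C * (((A a₀ x).card : ℝ) / q) *
            ∑ q' ∈ q.divisors.filter (fun d => 1 < d),
              ∑ b ∈ (Finset.Icc 1 (10 * q')).filter (fun b => Nat.gcd b q' = 1),
                FX a₀ x ((b : ℝ) / (10 * (q' : ℝ))) := by
  refine ⟨4, by norm_num, ?_⟩
  intro x a₀ q _ _ hq hcop
  set Big : ℝ := ∑ q' ∈ q.divisors.filter (fun d => 1 < d),
      ∑ b ∈ (Finset.Icc 1 (10 * q')).filter (fun b => Nat.gcd b q' = 1),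
        FX a₀ x ((b : ℝ) / (10 * (q' : ℝ))) with hBig
  have hBig0 : 0 ≤ Big :=
    Finset.sum_nonneg fun q' _ => Finset.sum_nonneg fun b _ => FX_nonneg a₀ x _
  set c : ℕ → ℂ := fun N => (((A a₀ x).filter (fun a => N ∣ a)).card : ℂ) with hc
  -- Möbius decomposition of the two cardinalities
  have h1 : ((((A a₀ x).filter (fun a => q ∣ a ∧ Nat.gcd a 10 = 1)).card : ℂ))
      = c (1 * q) - c (2 * q) - c (5 * q) + c (10 * q) := by
    rw [mobius_sum a₀ x q hcop]
    rw [show (1 * q) = q from one_mul q]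
  have hfilt : (A a₀ x).filter (fun a => Nat.gcd a 10 = 1)
      = (A a₀ x).filter (fun a => 1 ∣ a ∧ Nat.gcd a 10 = 1) := by
    apply Finset.filter_congr
    intro a _
    simp
  have h2 : ((((A a₀ x).filter (fun a => Nat.gcd a 10 = 1)).card : ℂ))
      = c 1 - c 2 - c 5 + c 10 := by
    rw [hfilt, mobius_sum a₀ x 1 (by norm_num)]
  -- the complex version of the LHS
  have hqC : (q : ℂ) ≠ 0 := Nat.cast_ne_zero.mpr hq.ne'
  have hDc : ((((A a₀ x).filter (fun a => q ∣ a ∧ Nat.gcd a 10 = 1)).card : ℂ))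
      - (1 / (q : ℂ)) * ((((A a₀ x).filter (fun a => Nat.gcd a 10 = 1)).card : ℂ))
      = (c (1 * q) - (1 / (q : ℂ)) * c 1) - (c (2 * q) - (1 / (q : ℂ)) * c 2)
        - (c (5 * q) - (1 / (q : ℂ)) * c 5) + (c (10 * q) - (1 / (q : ℂ)) * c 10) := by
    rw [h1, h2]; ring
  have hE1 := Ed_bound a₀ x q 1 hq (by norm_num) hcop
  have hE2 := Ed_bound a₀ x q 2 hq (by norm_num) hcop
  have hE5 := Ed_bound a₀ x q 5 hq (by norm_num) hcop
  have hE10 := Ed_bound a₀ x q 10 hq (by norm_num) hcop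
  have htri : ‖(c (1 * q) - (1 / (q : ℂ)) * c 1) - (c (2 * q) - (1 / (q : ℂ)) * c 2)
        - (c (5 * q) - (1 / (q : ℂ)) * c 5) + (c (10 * q) - (1 / (q : ℂ)) * c 10)‖
      ≤ ‖c (1 * q) - (1 / (q : ℂ)) * c 1‖
        + ‖c (2 * q) - (1 / (q : ℂ)) * c 2‖
        + ‖c (5 * q) - (1 / (q : ℂ)) * c 5‖
        + ‖c (10 * q) - (1 / (q : ℂ)) * c 10‖ := by
    set E1 := c (1 * q) - (1 / (q : ℂ)) * c 1
    set E2 := c (2 * q) - (1 / (q : ℂ)) * c 2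
    set E5 := c (5 * q) - (1 / (q : ℂ)) * c 5
    set E10 := c (10 * q) - (1 / (q : ℂ)) * c 10
    calc ‖E1 - E2 - E5 + E10‖
        ≤ ‖E1 - E2 - E5‖ + ‖E10‖ := norm_add_le _ _
      _ ≤ (‖E1 - E2‖ + ‖E5‖) + ‖E10‖ := by
          have : ‖E1 - E2 - E5‖ ≤ ‖E1 - E2‖ + ‖E5‖ := by
            simpa [sub_eq_add_neg] using norm_add_le (E1 - E2) (-E5)
          linarith
      _ ≤ ((‖E1‖ + ‖E2‖) + ‖E5‖) + ‖E10‖ := by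
          have : ‖E1 - E2‖ ≤ ‖E1‖ + ‖E2‖ := by
            simpa [sub_eq_add_neg] using norm_add_le E1 (-E2)
          linarith
      _ = _ := by ring
  -- combine the bounds
  have hqR : (0 : ℝ) < q := Nat.cast_pos.mpr hq
  have hbound : ‖(((A a₀ x).filter (fun a => q ∣ a ∧ Nat.gcd a 10 = 1)).card : ℂ)
      - (1 / (q : ℂ)) * ((((A a₀ x).filter (fun a => Nat.gcd a 10 = 1)).card : ℂ))‖
      ≤ 4 * (((A a₀ x).card : ℝ) / q) * Big := by
    rw [hDc]
    refine le_trans htri ?_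
    have key : ∀ d : ℕ, 0 < d →
        (1 / ((d : ℝ) * q)) * (((A a₀ x).card : ℝ) * Big)
          ≤ (1 / (q : ℝ)) * (((A a₀ x).card : ℝ) * Big) := by
      intro d hd0
      apply mul_le_mul_of_nonneg_right _ (by positivity)
      apply one_div_le_one_div_of_le hqR
      have hd1 : (1 : ℝ) ≤ (d : ℝ) := by exact_mod_cast hd0
      nlinarith [hd1, hqR]
    have k1 := le_trans hE1 (key 1 one_pos)
    have k2 := le_trans hE2 (key 2 (by norm_num))
    have k5 := le_trans hE5 (key 5 (by norm_num))
    have k10 := le_trans hE10 (key 10 (by norm_num))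
    have : (1 / (q : ℝ)) * (((A a₀ x).card : ℝ) * Big) * 4
        = 4 * (((A a₀ x).card : ℝ) / q) * Big := by ring
    linarith [k1, k2, k5, k10]
  -- transfer to the real absolute value
  have hcast : ((((((A a₀ x).filter (fun a => q ∣ a ∧ Nat.gcd a 10 = 1)).card : ℝ)
      - (1 / (q : ℝ)) * (((A a₀ x).filter (fun a => Nat.gcd a 10 = 1)).card : ℝ)) : ℝ) : ℂ)
      = (((A a₀ x).filter (fun a => q ∣ a ∧ Nat.gcd a 10 = 1)).card : ℂ)
        - (1 / (q : ℂ)) * ((((A a₀ x).filter (fun a => Nat.gcd a 10 = 1)).card : ℂ)) := by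
    push_cast
    ring
  calc abs ((((A a₀ x).filter (fun a => q ∣ a ∧ Nat.gcd a 10 = 1)).card : ℝ)
        - (1 / (q : ℝ)) * (((A a₀ x).filter (fun a => Nat.gcd a 10 = 1)).card : ℝ))
      = ‖(((((A a₀ x).filter (fun a => q ∣ a ∧ Nat.gcd a 10 = 1)).card : ℝ)
        - (1 / (q : ℝ)) * (((A a₀ x).filter (fun a => Nat.gcd a 10 = 1)).card : ℝ) : ℝ) : ℂ)‖ := by
        rw [Complex.norm_real, Real.norm_eq_abs]
    _ = ‖(((A a₀ x).filter (fun a => q ∣ a ∧ Nat.gcd a 10 = 1)).card : ℂ)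
        - (1 / (q : ℂ)) * ((((A a₀ x).filter (fun a => Nat.gcd a 10 = 1)).card : ℂ))‖ := by
        rw [hcast]
    _ ≤ 4 * (((A a₀ x).card : ℝ) / q) * Big := hbound
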